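/- Let u be a w-bubble. Suppose there are pairwise distinct indices i_1, …, i_N in {1, …, n} with w_{i_j} dividing w_{i_{j+1}} for every j ∈ {1, …, N−1}, and two further indices k, l ∈ {1, …, n} \ {i_1, …, i_N} (k ≠ l) such that w_{i_N} divides w_k + w_l. Then Σ_{j=1}^N w_{i_j} u_{i_j} + w_k u_k + w_l u_l < 2 d_w. -/

import Mathlib

/-- The weighted dot product `w · u = ∑ i, w i * u i`. -/
def dotW {n : ℕ} (w u : Fin n → ℕ) : ℕ := ∑ i, w i * u i

/-- `d_w`, the least common multiple of the weights. -/
def lcmW {n : ℕ} (w : Fin n → ℕ) : ℕ := Finset.univ.lcm w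

/-- `u` is a `w`-bubble: `w · u ≥ 2 d_w` and there is no `v ⪯ u` with `w · v = d_w`. -/
def IsBubble {n : ℕ} (w u : Fin n → ℕ) : Prop :=
  2 * lcmW w ≤ dotW w u ∧
    ¬ ∃ v : Fin n → ℕ, (∀ i, v i ≤ u i) ∧ dotW w v = lcmW w


/-- Greedy exact-change lemma for a divisibility chain of coins. -/
lemma chain_rep : ∀ (m : ℕ) (b c : Fin m → ℕ) (T : ℕ),
    (∀ i j : Fin m, i ≤ j → b i ∣ b j) →
    (∀ i, b i ∣ T) →
    T ≤ ∑ j, b j * c j →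
    ∃ f : Fin m → ℕ, (∀ j, f j ≤ c j) ∧ ∑ j, b j * f j = T := by
  intro m
  induction m with
  | zero =>
    intro b c T _ _ hle
    refine ⟨fun j => 0, fun j => j.elim0, ?_⟩
    simp at hle ⊢
    omega
  | succ m ih =>
    intro b c T hmono hTd hle
    by_cases hcase : T ≤ b (Fin.last m) * c (Fin.last m)
    · obtain ⟨q, hq⟩ := hTd (Fin.last m)
      rcases Nat.eq_zero_or_pos (b (Fin.last m)) with hb0 | hbpos
      · have hT0 : T = 0 := by rw [hq, hb0]; ring
        exact ⟨fun j => 0, fun j => Nat.zero_le _, by simp [hT0]⟩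
      · have hqle : q ≤ c (Fin.last m) := by
          have : b (Fin.last m) * q ≤ b (Fin.last m) * c (Fin.last m) := by
            rw [← hq]; exact hcase
          exact Nat.le_of_mul_le_mul_left this hbpos
        refine ⟨fun j => if j = Fin.last m then q else 0, ?_, ?_⟩
        · intro j
          by_cases hj : j = Fin.last m
          · simp [hj, hqle]
          · simp [hj]
        · have h1 : ∀ j : Fin (m+1), b j * (if j = Fin.last m then q else 0)
              = if j = Fin.last m then b (Fin.last m) * q else 0 := by
            intro j; by_cases hj : j = Fin.last m <;> simp [hj]
          rw [Finset.sum_congr rfl (fun j _ => h1 j), Finset.sum_ite_eq' Finset.univ]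
          simp [hq]
    · push_neg at hcase
      set b' : Fin m → ℕ := fun i => b i.castSucc with hb'
      set c' : Fin m → ℕ := fun i => c i.castSucc with hc'
      set T' := T - b (Fin.last m) * c (Fin.last m) with hT'
      have hmono' : ∀ i j : Fin m, i ≤ j → b' i ∣ b' j := by
        intro i j hij
        exact hmono _ _ (by simpa using hij)
      have hT'd : ∀ i : Fin m, b' i ∣ T' := by
        intro i
        have h1 : b' i ∣ b (Fin.last m) := hmono _ _ (Fin.le_last _)
        exact Nat.dvd_sub (hTd _) (h1.mul_right _)
      have hle' : T' ≤ ∑ j, b' j * c' j := by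
        have hsum : ∑ j : Fin (m+1), b j * c j
            = (∑ j : Fin m, b' j * c' j) + b (Fin.last m) * c (Fin.last m) := by
          rw [Fin.sum_univ_castSucc]
        omega
      obtain ⟨f', hf'le, hf'sum⟩ := ih b' c' T' hmono' hT'd hle'
      refine ⟨Fin.snoc f' (c (Fin.last m)), ?_, ?_⟩
      · intro j
        induction j using Fin.lastCases with
        | last => simp
        | cast i => simpa using hf'le i
      · rw [Fin.sum_univ_castSucc]
        simp only [Fin.snoc_castSucc, Fin.snoc_last]
        have : ∑ i : Fin m, b i.castSucc * f' i = T' := hf'sum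
        rw [this]
        omega

lemma build_aux {n N : ℕ} (w u : Fin n → ℕ) (e : Fin N → Fin n)
    (he : Function.Injective e)
    (k l : Fin n) (hkl : k ≠ l) (hk : ∀ j, e j ≠ k) (hl : ∀ j, e j ≠ l)
    (x y : ℕ) (hx : x ≤ u k) (hy : y ≤ u l) (f : Fin N → ℕ) (hf : ∀ j, f j ≤ u (e j)) :
    ∃ v : Fin n → ℕ, (∀ i, v i ≤ u i) ∧
      dotW w v = w k * x + w l * y + ∑ j, w (e j) * f j := by
  refine ⟨fun i => (if i = k then x else 0) + (if i = l then y else 0) +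
      ∑ j, if e j = i then f j else 0, ?_, ?_⟩
  · intro i
    by_cases hik : i = k
    · subst hik
      have hz : ∑ j, (if e j = i then f j else 0) = 0 :=
        Finset.sum_eq_zero (fun j _ => by simp [hk j])
      simp [hz, hkl, hx]
    · by_cases hil : i = l
      · subst hil
        have hz : ∑ j, (if e j = i then f j else 0) = 0 :=
          Finset.sum_eq_zero (fun j _ => by simp [hl j])
        simp [hz, hik, hy]
      · simp only [hik, hil, if_neg, ite_false, zero_add]
        by_cases hex : ∃ j0, e j0 = i
        · obtain ⟨j0, hj0⟩ := hex
          have h1 : ∀ j, (if e j = i then f j else 0) = (if j = j0 then f j else 0) := by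
            intro j
            by_cases hj : j = j0
            · simp [hj, hj0]
            · have : e j ≠ i := fun hc => hj (he (hc.trans hj0.symm))
              simp [hj, this]
          rw [Finset.sum_congr rfl (fun j _ => h1 j), Finset.sum_ite_eq' Finset.univ]
          simp [← hj0, hf j0]
        · push_neg at hex
          have hz : ∑ j, (if e j = i then f j else 0) = 0 :=
            Finset.sum_eq_zero (fun j _ => by simp [hex j])
          simp [hz]
  · unfold dotW
    have hsplit : ∀ i : Fin n, w i * ((if i = k then x else 0) + (if i = l then y else 0) +
        ∑ j, if e j = i then f j else 0)
        = (if i = k then w k * x else 0) + (if i = l then w l * y else 0) +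
          ∑ j, (if e j = i then w (e j) * f j else 0) := by
      intro i
      rw [mul_add, mul_add, Finset.mul_sum]
      congr 1
      · congr 1
        · by_cases hik : i = k <;> simp [hik]
        · by_cases hil : i = l <;> simp [hil]
      · refine Finset.sum_congr rfl (fun j _ => ?_)
        by_cases hj : e j = i
        · simp [hj]
        · simp [hj]
    rw [Finset.sum_congr rfl (fun i _ => hsplit i)]
    rw [Finset.sum_add_distrib, Finset.sum_add_distrib]
    rw [Finset.sum_ite_eq' Finset.univ k, Finset.sum_ite_eq' Finset.univ l]
    rw [Finset.sum_comm]
    simp only [Finset.mem_univ, if_true]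
    congr 1
    refine Finset.sum_congr rfl (fun j _ => ?_)
    rw [Finset.sum_ite_eq Finset.univ (e j)]
    simp

theorem bubble_chain_pair_sum_lt_two_lcm {n : ℕ} (hn : 0 < n) (w : Fin n → ℕ)
    (hw : ∀ i, 0 < w i) (u : Fin n → ℕ) (hu : IsBubble w u)
    (N : ℕ) (hN : 0 < N) (e : Fin N → Fin n) (he : Function.Injective e)
    (hdvd : ∀ (j : ℕ) (h : j + 1 < N), w (e ⟨j, by omega⟩) ∣ w (e ⟨j + 1, h⟩))
    (k l : Fin n) (hkl : k ≠ l) (hk : ∀ j, e j ≠ k) (hl : ∀ j, e j ≠ l)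
    (hsum : w (e ⟨N - 1, by omega⟩) ∣ w k + w l) :
    ∑ j, w (e j) * u (e j) + w k * u k + w l * u l < 2 * lcmW w := by
  by_contra hcon
  push_neg at hcon
  set d := lcmW w with hd
  set C := ∑ j, w (e j) * u (e j) with hC
  have hkd : w k ∣ d := Finset.dvd_lcm (Finset.mem_univ k)
  have hld : w l ∣ d := Finset.dvd_lcm (Finset.mem_univ l)
  -- monotonicity of the chain
  have hstep : ∀ (t a : ℕ) (h : a + t < N), w (e ⟨a, by omega⟩) ∣ w (e ⟨a + t, h⟩) := by
    intro t
    induction t with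
    | zero => intro a h; exact dvd_rfl
    | succ t iht =>
      intro a h
      have h1 : a + t < N := by omega
      have h2 := iht a h1
      have h3 := hdvd (a + t) (by omega)
      have h4 : (⟨a + t + 1, by omega⟩ : Fin N) = ⟨a + (t + 1), h⟩ := by
        ext; simp; omega
      exact h2.trans (h4 ▸ h3)
  have hmono : ∀ i j : Fin N, i ≤ j → w (e i) ∣ w (e j) := by
    intro i j hij
    have h1 := hstep (j.1 - i.1) i.1 (by omega)
    have h2 : (⟨i.1, by omega⟩ : Fin N) = i := rfl
    have h3 : (⟨i.1 + (j.1 - i.1), by omega⟩ : Fin N) = j := by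
      ext; simp; omega
    rwa [h2, h3] at h1
  have hgd : w (e ⟨N - 1, by omega⟩) ∣ d := Finset.dvd_lcm (Finset.mem_univ _)
  refine hu.2 ?_
  by_cases h1 : d ≤ w k * u k
  · obtain ⟨q, hq⟩ := hkd
    have hqle : q ≤ u k := by
      have : w k * q ≤ w k * u k := by rw [← hq]; exact h1
      exact Nat.le_of_mul_le_mul_left this (hw k)
    obtain ⟨v, hv, hdv⟩ := build_aux w u e he k l hkl hk hl q 0 hqle (Nat.zero_le _)
      (fun _ => 0) (fun j => Nat.zero_le _)
    exact ⟨v, hv, by simp [hdv, ← hq]; exact hd⟩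
  · by_cases h2 : d ≤ w l * u l
    · obtain ⟨q, hq⟩ := hld
      have hqle : q ≤ u l := by
        have : w l * q ≤ w l * u l := by rw [← hq]; exact h2
        exact Nat.le_of_mul_le_mul_left this (hw l)
      obtain ⟨v, hv, hdv⟩ := build_aux w u e he k l hkl hk hl 0 q (Nat.zero_le _) hqle
        (fun _ => 0) (fun j => Nat.zero_le _)
      exact ⟨v, hv, by simp [hdv, ← hq]; exact hd⟩
    · push_neg at h1 h2
      -- both w k * u k < d and w l * u l < d
      have hkk : w k * u k + w k ≤ d := by
        obtain ⟨ck, hck⟩ := hkd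
        have hck' : u k < ck := by
          have : w k * u k < w k * ck := by rw [← hck]; exact h1
          exact Nat.lt_of_mul_lt_mul_left this
        calc w k * u k + w k = w k * (u k + 1) := by ring
          _ ≤ w k * ck := Nat.mul_le_mul_left _ (by omega)
          _ = d := hck.symm
      have hll : w l * u l + w l ≤ d := by
        obtain ⟨cl, hcl⟩ := hld
        have hcl' : u l < cl := by
          have : w l * u l < w l * cl := by rw [← hcl]; exact h2
          exact Nat.lt_of_mul_lt_mul_left this
        calc w l * u l + w l = w l * (u l + 1) := by ring
          _ ≤ w l * cl := Nat.mul_le_mul_left _ (by omega)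
          _ = d := hcl.symm
      set P := w k + w l with hPdef
      have hP : 0 < P := by have := hw k; omega
      have hCP : P ≤ C := by omega
      set x := min (min (u k) (u l)) (d / P) with hxdef
      have hxk : x ≤ u k := by omega
      have hxl : x ≤ u l := by omega
      have hPx : P * x ≤ d :=
        le_trans (Nat.mul_le_mul_left P (min_le_right _ _)) (Nat.mul_div_le d P)
      set r := d - P * x with hrdef
      have hgr : w (e ⟨N - 1, by omega⟩) ∣ r :=
        Nat.dvd_sub hgd (hsum.mul_right x)
      have hrC : r ≤ C := by
        rcases le_or_gt (d / P) (min (u k) (u l)) with hc | hc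
        · have hx' : x = d / P := by omega
          have hx2 : P * x = P * (d / P) := by rw [hx']
          have hmod := Nat.div_add_mod d P
          have hmodlt : d % P < P := Nat.mod_lt _ hP
          omega
        · have hPx1 : P * (x + 1) ≤ d := by
            have hx1 : x + 1 ≤ d / P := by omega
            have := Nat.mul_le_mul_left P hx1
            have h4 : P * (d / P) ≤ d := Nat.mul_div_le d P
            omega
          rcases le_total (u k) (u l) with hkl2 | hkl2
          · have hxe : x = u k := by omega
            have hA : w k * u k ≤ P * x := by
              rw [hxe]
              exact Nat.mul_le_mul_right _ (by omega)
            omega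
          · have hxe : x = u l := by omega
            have hA : w l * u l ≤ P * x := by
              rw [hxe]
              exact Nat.mul_le_mul_right _ (by omega)
            omega
      obtain ⟨f, hfle, hfsum⟩ := chain_rep N (fun j => w (e j)) (fun j => u (e j)) r
        hmono
        (fun i => (hmono i ⟨N - 1, by omega⟩ (by
          rw [Fin.le_def]; simp; omega)).trans hgr)
        (by rw [← hC]; exact hrC)
      obtain ⟨v, hv, hdv⟩ := build_aux w u e he k l hkl hk hl x x hxk hxl f hfle
      refine ⟨v, hv, ?_⟩
      rw [hdv, hfsum]
      have : w k * x + w l * x = P * x := by ring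
      omega
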